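/- Let a, b ∈ ℝ with a ≠ 0, β > 0, and let (ξ_n)_{n≥0} be i.i.d. standard normal random variables. Define x_0 = 0, l_0 = 0, and for n ≥ 0 set x_{n+1} = b/a + ξ_n/(2^{l_n} √2 a β), where l_{n+1} ∈ ℤ satisfies 2^{l_{n+1}}|b - a x_{n+1}| ∈ (1/2, 1]. Then for every n ≥ 0, |x_{n+1} - b/a| ≥ (1/|a|) (1/(√2 β))^{n+1} |ξ_0 ⋯ ξ_n|. -/

import Mathlib

open Filter

/-- Lower bound on the error of the iterative scheme: if `x_{n+1} = b/a + ξ_n/(2^{l_n}√2 a β)`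
with `2^{l_{n+1}}|b - a x_{n+1}| ∈ (1/2, 1]`, then for every `n ≥ 0`,
`|x_{n+1} - b/a| ≥ (1/|a|)(1/(√2 β))^{n+1}|ξ_0 ⋯ ξ_n|`. -/
theorem error_lower_bound
    (a b β : ℝ) (ha : a ≠ 0) (hβ : 0 < β)
    (ξ x : ℕ → ℝ) (l : ℕ → ℤ)
    (hx0 : x 0 = 0) (hl0 : l 0 = 0)
    (hx : ∀ n, x (n + 1) = b / a + ξ n / ((2 : ℝ) ^ (l n) * Real.sqrt 2 * a * β))
    (hl : ∀ n, (2 : ℝ) ^ (l (n + 1)) * |b - a * x (n + 1)| ∈ Set.Ioc (1 / 2 : ℝ) 1) :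
    ∀ n,
      (1 / |a|) * (1 / (Real.sqrt 2 * β)) ^ (n + 1) * |∏ i ∈ Finset.range (n + 1), ξ i| ≤
        |x (n + 1) - b / a| := by
  have hs2 : (0:ℝ) < Real.sqrt 2 := Real.sqrt_pos.mpr (by norm_num)
  have hpow : ∀ n, (0:ℝ) < (2:ℝ) ^ (l n) := fun n => zpow_pos (by norm_num) _
  have habs : (0:ℝ) < |a| := abs_pos.mpr ha
  have key : ∀ n, |x (n+1) - b/a| = |ξ n| / ((2:ℝ)^(l n) * Real.sqrt 2 * |a| * β) := by
    intro n
    rw [hx n]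
    have h1 : b / a + ξ n / ((2:ℝ)^(l n) * Real.sqrt 2 * a * β) - b/a
        = ξ n / ((2:ℝ)^(l n) * Real.sqrt 2 * a * β) := by ring
    rw [h1, abs_div]
    congr 1
    rw [abs_mul, abs_mul, abs_mul, abs_of_pos (hpow n), abs_of_pos hs2, abs_of_pos hβ]
  intro n
  induction n with
  | zero =>
    rw [key 0, hl0]
    apply le_of_eq
    rw [Finset.prod_range_one]
    field_simp
    rw [zero_add, pow_one, mul_one_div_cancel (mul_pos hs2 hβ).ne', one_mul]
  | succ m ih =>
    rw [key (m+1), Finset.prod_range_succ, abs_mul]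
    have h2 := (hl m).2
    have h1 := (hl m).1
    have habx : |b - a * x (m+1)| = |a| * |x (m+1) - b/a| := by
      rw [abs_sub_comm, ← abs_mul]
      congr 1
      field_simp
    have hxpos : 0 < |x (m+1) - b/a| := by
      by_contra h
      push_neg at h
      have : |x (m+1) - b/a| = 0 := le_antisymm h (abs_nonneg _)
      rw [habx, this, mul_zero, mul_zero] at h1
      norm_num at h1
    rw [habx] at h2
    calc (1 / |a|) * (1 / (Real.sqrt 2 * β)) ^ (m + 1 + 1) *
          (|∏ i ∈ Finset.range (m + 1), ξ i| * |ξ (m+1)|)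
        = (|ξ (m+1)| / (Real.sqrt 2 * β)) *
          ((1 / |a|) * (1 / (Real.sqrt 2 * β)) ^ (m + 1) *
            |∏ i ∈ Finset.range (m + 1), ξ i|) := by ring
      _ ≤ (|ξ (m+1)| / (Real.sqrt 2 * β)) * |x (m+1) - b/a| := by
          apply mul_le_mul_of_nonneg_left ih
          positivity
      _ ≤ |ξ (m+1)| / ((2:ℝ)^(l (m+1)) * Real.sqrt 2 * |a| * β) := by
          rw [div_mul_eq_mul_div, div_le_div_iff₀ (by positivity) (by positivity)]
          have hξ : 0 ≤ |ξ (m+1)| := abs_nonneg _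
          nlinarith [hpow (m+1), mul_le_mul_of_nonneg_left h2 hξ,
            mul_pos hs2 hβ]
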